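/- Let f'(0) > 0 and let ρ: ℝ → ℝ be convex, even, with ρ(0) = 0 and ρ(λ) ≥ 0 for all λ. Set μ(λ) = λ²/2 + f'(0) + ρ(λ). Then for every λ > λ₀ := √(2 f'(0)), we have μ(λ)/λ > μ(λ₀)/λ₀; in particular the infimum of μ(λ)/λ over (0,∞) is attained in the interval (0, λ₀]. -/

import Mathlib

theorem unique_minimizer_interval (f'0 : ℝ) (hf : 0 < f'0) (ρ : ℝ → ℝ)
    (hconv : ConvexOn ℝ Set.univ ρ)
    (heven : ∀ lam : ℝ, ρ (-lam) = ρ lam)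
    (h0 : ρ 0 = 0)
    (hnonneg : ∀ lam : ℝ, 0 ≤ ρ lam)
    (μ : ℝ → ℝ)
    (hμ : ∀ lam : ℝ, μ lam = lam ^ 2 / 2 + f'0 + ρ lam) :
    (∀ lam : ℝ, Real.sqrt (2 * f'0) < lam →
        μ (Real.sqrt (2 * f'0)) / Real.sqrt (2 * f'0) < μ lam / lam) ∧
    ∃ lamStar ∈ Set.Ioc (0 : ℝ) (Real.sqrt (2 * f'0)),
      ∀ lam > (0 : ℝ), μ lamStar / lamStar ≤ μ lam / lam := by
  set l0 : ℝ := Real.sqrt (2 * f'0) with hl0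
  have hl0pos : 0 < l0 := Real.sqrt_pos.mpr (by linarith)
  have hl0sq : l0 ^ 2 = 2 * f'0 := Real.sq_sqrt (by linarith)
  -- slope monotonicity of ρ through 0
  have hslope : ∀ a b : ℝ, 0 < a → a ≤ b → ρ a / a ≤ ρ b / b := by
    intro a b ha hab
    have hb : 0 < b := lt_of_lt_of_le ha hab
    have key := hconv.2 (Set.mem_univ b) (Set.mem_univ 0)
      (show (0:ℝ) ≤ a / b by positivity)
      (show (0:ℝ) ≤ 1 - a / b by rw [sub_nonneg]; exact div_le_one_of_le₀ hab hb.le)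
      (by ring)
    have hab' : a / b * b + (1 - a / b) * 0 = a := by field_simp; ring
    rw [smul_eq_mul, smul_eq_mul, smul_eq_mul, smul_eq_mul, mul_zero, add_zero] at key
    rw [div_mul_cancel₀ _ hb.ne'] at key
    rw [h0, mul_zero, add_zero] at key
    rw [div_le_div_iff₀ ha hb]
    have hb' : (0:ℝ) < b := hb
    nlinarith [hnonneg b]
  -- strict part
  have hstrict : ∀ lam : ℝ, l0 < lam → μ l0 / l0 < μ lam / lam := by
    intro lam hlam
    have hlp : 0 < lam := hl0pos.trans hlam
    have hρ : ρ l0 / l0 ≤ ρ lam / lam := hslope l0 lam hl0pos hlam.le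
    rw [hμ l0, hμ lam]
    have e1 : (l0 ^ 2 / 2 + f'0 + ρ l0) / l0 = l0 / 2 + f'0 / l0 + ρ l0 / l0 := by
      field_simp
    have e2 : (lam ^ 2 / 2 + f'0 + ρ lam) / lam = lam / 2 + f'0 / lam + ρ lam / lam := by
      field_simp
    rw [e1, e2]
    have hkey : l0 / 2 + f'0 / l0 < lam / 2 + f'0 / lam := by
      rw [div_add_div _ _ two_ne_zero hl0pos.ne', div_add_div _ _ two_ne_zero hlp.ne',
        div_lt_div_iff₀ (by positivity) (by positivity)]
      nlinarith [hl0sq, mul_pos (mul_pos (sub_pos.mpr hlam) (sub_pos.mpr hlam)) hl0pos, hl0pos, hlp]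
    linarith
  refine ⟨hstrict, ?_⟩
  -- continuity
  have hρcont : Continuous ρ := by
    rw [← continuousOn_univ]
    exact hconv.continuousOn isOpen_univ
  have hμcont : Continuous μ := by
    have heq : μ = fun lam : ℝ => lam ^ 2 / 2 + f'0 + ρ lam := funext hμ
    rw [heq]; fun_prop
  set g : ℝ → ℝ := fun lam => μ lam / lam with hgdef
  have hglb : ∀ lam : ℝ, 0 < lam → f'0 / lam ≤ g lam := by
    intro lam hlp
    have hnum : f'0 ≤ μ lam := by
      rw [hμ]; nlinarith [hnonneg lam, sq_nonneg lam]
    exact div_le_div_of_nonneg_right hnum hlp.le |>.trans_eq rfl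
  have hgl0pos : 0 < g l0 := lt_of_lt_of_le (by positivity) (hglb l0 hl0pos)
  set δ : ℝ := min l0 (f'0 / g l0) with hδdef
  have hδpos : 0 < δ := lt_min hl0pos (by positivity)
  have hδle : δ ≤ l0 := min_le_left _ _
  -- small lam: g lam ≥ g l0
  have hsmall : ∀ lam : ℝ, 0 < lam → lam ≤ δ → g l0 ≤ g lam := by
    intro lam hlp hlδ
    have h1 : lam ≤ f'0 / g l0 := hlδ.trans (min_le_right _ _)
    have h2 : g l0 ≤ f'0 / lam := by
      rw [le_div_iff₀ hlp]
      calc g l0 * lam ≤ g l0 * (f'0 / g l0) := by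
            exact mul_le_mul_of_nonneg_left h1 hgl0pos.le
        _ = f'0 := by field_simp
    exact h2.trans (hglb lam hlp)
  -- compact min on [δ, l0]
  have hgcont : ContinuousOn g (Set.Icc δ l0) := by
    apply ContinuousOn.div hμcont.continuousOn continuousOn_id
    intro x hx
    exact ne_of_gt (lt_of_lt_of_le hδpos hx.1)
  obtain ⟨lamStar, hlamStarMem, hmin⟩ :=
    (isCompact_Icc (a := δ) (b := l0)).exists_isMinOn ⟨l0, ⟨hδle, le_refl l0⟩⟩ hgcont
  have hlsp : 0 < lamStar := lt_of_lt_of_le hδpos hlamStarMem.1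
  refine ⟨lamStar, ⟨hlsp, hlamStarMem.2⟩, ?_⟩
  intro lam hlp
  have hminl0 : g lamStar ≤ g l0 := hmin ⟨hδle, le_refl l0⟩
  rcases le_or_gt lam l0 with hle | hgt
  · rcases le_or_gt δ lam with hδlam | hlamδ
    · exact hmin ⟨hδlam, hle⟩
    · exact hminl0.trans (hsmall lam hlp hlamδ.le)
  · exact hminl0.trans (hstrict lam hgt).le
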